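/- Let X and Y be n-dimensional real normed linear spaces and let x ∈ X be nonzero with n linearly independent support functionals f₁, …, f_n ∈ J(x). If a linear operator T : X → Y satisfies Tx ⊥_B Tz for all z ∈ ker f_i, for each 1 ≤ i ≤ n, then either Tx = 0 or T is bijective. -/

import Mathlib

/-- Birkhoff-James orthogonality. -/
def BJOrth {X : Type*} [NormedAddCommGroup X] [NormedSpace ℝ X] (x y : X) : Prop :=
  ∀ t : ℝ, ‖x‖ ≤ ‖x + t • y‖

/-- The set of support functionals at `x`. -/
def suppFun {X : Type*} [NormedAddCommGroup X] [NormedSpace ℝ X] (x : X) :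
    Set (X →L[ℝ] ℝ) := {f | ‖f‖ = 1 ∧ f x = ‖x‖}

theorem stmt_16 {X Y : Type*} [NormedAddCommGroup X] [NormedSpace ℝ X]
    [NormedAddCommGroup Y] [NormedSpace ℝ Y] (n : ℕ)
    (hX : Module.finrank ℝ X = n) (hY : Module.finrank ℝ Y = n)
    [FiniteDimensional ℝ X] [FiniteDimensional ℝ Y]
    (x : X) (hx : x ≠ 0)
    (f : Fin n → (X →L[ℝ] ℝ)) (hf : ∀ i, f i ∈ suppFun x)
    (hind : LinearIndependent ℝ f)
    (T : X →L[ℝ] Y)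
    (hpres : ∀ i : Fin n, ∀ z : X, f i z = 0 → BJOrth (T x) (T z)) :
    T x = 0 ∨ Function.Bijective T := by
  by_cases hTx : T x = 0
  · exact Or.inl hTx
  right
  have hdual : Module.finrank ℝ (X →L[ℝ] ℝ) = n := by
    rw [(LinearMap.toContinuousLinearMap : (X →ₗ[ℝ] ℝ) ≃ₗ[ℝ] (X →L[ℝ] ℝ)).finrank_eq.symm]
    rw [Subspace.dual_finrank_eq, hX]
  have hcard : Fintype.card (Fin n) = Module.finrank ℝ (X →L[ℝ] ℝ) := by
    simp [hdual]
  have hn : 0 < n := by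
    have : Nontrivial X := ⟨x, 0, hx⟩
    rw [← hX]; exact Module.finrank_pos
  haveI : Nonempty (Fin n) := ⟨⟨0, hn⟩⟩
  let B := basisOfLinearIndependentOfCardEqFinrank hind hcard
  have hB : ∀ i, B i = f i := fun i => by
    simp [B, coe_basisOfLinearIndependentOfCardEqFinrank]
  have hker : ∀ z : X, T z = 0 → z = 0 := by
    intro z hz
    by_contra hzne
    have hexist : ∃ i, f i z ≠ 0 := by
      by_contra hall
      push_neg at hall
      obtain ⟨g, hg⟩ := SeparatingDual.exists_ne_zero (R := ℝ) hzne
      apply hg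
      calc g z = (∑ i, B.repr g i • B i) z := by rw [B.sum_repr g]
        _ = ∑ i, B.repr g i • (f i z) := by
            rw [ContinuousLinearMap.coe_sum', Finset.sum_apply]
            simp [hB]
        _ = 0 := by simp [hall]
    obtain ⟨i, hi⟩ := hexist
    have hfx : f i x = ‖x‖ := (hf i).2
    set c : ℝ := ‖x‖ / f i z with hc
    have hw : f i (x - c • z) = 0 := by
      simp only [map_sub, map_smul, smul_eq_mul, hfx, hc]
      field_simp
      ring
    have horth := hpres i (x - c • z) hw
    have hTw : T (x - c • z) = T x := by
      simp [map_sub, map_smul, hz]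
    rw [hTw] at horth
    have h1 := horth (-1)
    simp only [neg_smul, one_smul, add_neg_cancel, norm_zero] at h1
    exact hTx (norm_le_zero_iff.mp h1)
  have hinj : Function.Injective T := by
    rw [← ContinuousLinearMap.coe_coe, ← LinearMap.ker_eq_bot]
    rw [Submodule.eq_bot_iff]
    intro z hz
    exact hker z hz
  exact ⟨hinj, (LinearMap.injective_iff_surjective_of_finrank_eq_finrank
      (f := (T : X →ₗ[ℝ] Y)) (by rw [hX, hY])).mp hinj⟩
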